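/- Let E be a strongly connected directed graph with finitely many vertices. Then the graph inverse semigroup G(E) satisfies condition (⋆): for every infinite set A of paths in E there is an infinite subset B ⊆ A and an element μ ∈ G(E) such that for each x ∈ B the product μ·x is a path with |μ·x| > |x|. -/

import Mathlib

/-- A directed graph: vertices, edges, source and range maps. -/
structure DGraph where
  V : Type
  E : Type
  s : E → V
  r : E → V

namespace DGraph

variable {Q : DGraph}

/-- `pOk Q a l` : the list of edges `l` forms a valid path starting at vertex `a`. -/
def pOk (Q : DGraph) : Q.V → List Q.E → Prop
  | _, [] => True
  | a, e :: l => Q.s e = a ∧ pOk Q (Q.r e) l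

/-- The end vertex of an edge-list starting at `a`. -/
def pRng (Q : DGraph) (a : Q.V) (l : List Q.E) : Q.V :=
  l.foldl (fun _ e => Q.r e) a

theorem pRng_append (a : Q.V) (l₁ l₂ : List Q.E) :
    pRng Q a (l₁ ++ l₂) = pRng Q (pRng Q a l₁) l₂ :=
  by unfold pRng; exact List.foldl_append

theorem pOk_append {a : Q.V} {l₁ l₂ : List Q.E} (h₁ : pOk Q a l₁)
    (h₂ : pOk Q (pRng Q a l₁) l₂) : pOk Q a (l₁ ++ l₂) := by
  induction l₁ generalizing a with
  | nil => simpa [pRng] using h₂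
  | cons e l ih =>
      obtain ⟨he, hl⟩ := h₁
      exact ⟨he, ih hl h₂⟩

theorem pOk_drop {a : Q.V} {l₁ l₂ : List Q.E} (h : pOk Q a (l₁ ++ l₂)) :
    pOk Q (pRng Q a l₁) l₂ := by
  induction l₁ generalizing a with
  | nil => simpa [pRng] using h
  | cons e l ih => exact ih h.2

/-- A (finite, directed) path in the graph `Q`: a start vertex together with a
compatible list of edges.  Paths of length `0` are vertices. -/
structure GPath (Q : DGraph) where
  start : Q.V
  edges : List Q.E
  ok : pOk Q start edges

/-- The source `s(p)` of a path. -/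
def GPath.src (p : GPath Q) : Q.V := p.start

/-- The range `r(p)` of a path. -/
def GPath.rng (p : GPath Q) : Q.V := pRng Q p.start p.edges

/-- The length `|p|` of a path. -/
def GPath.length (p : GPath Q) : ℕ := p.edges.length

/-- The trivial (length zero) path at a vertex `a`. -/
def GPath.triv (Q : DGraph) (a : Q.V) : GPath Q := ⟨a, [], trivial⟩

/-- Concatenation of composable paths. -/
def GPath.comp (p q : GPath Q) (h : p.rng = q.start) : GPath Q :=
  ⟨p.start, p.edges ++ q.edges, pOk_append p.ok (by
    have hq := q.ok
    rw [← h] at hq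
    exact hq)⟩

theorem GPath.comp_rng (p q : GPath Q) (h : p.rng = q.start) :
    (p.comp q h).rng = q.rng := by
  show pRng Q p.start (p.edges ++ q.edges) = q.rng
  rw [pRng_append, show pRng Q p.start p.edges = q.start from h]
  rfl

theorem exists_sub {p q : GPath Q} (h1 : q.start = p.start)
    (h2 : p.edges <+: q.edges) :
    ∃ w : GPath Q, w.start = p.rng ∧ w.rng = q.rng ∧ p.edges ++ w.edges = q.edges := by
  obtain ⟨t, ht⟩ := h2
  have hok : pOk Q p.start (p.edges ++ t) := by rw [ht, ← h1]; exact q.ok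
  refine ⟨⟨p.rng, t, pOk_drop hok⟩, rfl, ?_, ht⟩
  show pRng Q (pRng Q p.start p.edges) t = pRng Q q.start q.edges
  rw [← pRng_append, ht, ← h1]

/-- If the path `q` decomposes as `p·w`, this is the path `w`. -/
noncomputable def subPath (p q : GPath Q) (h1 : q.start = p.start)
    (h2 : p.edges <+: q.edges) : GPath Q :=
  (exists_sub h1 h2).choose

theorem subPath_spec (p q : GPath Q) (h1 : q.start = p.start)
    (h2 : p.edges <+: q.edges) :
    (subPath p q h1 h2).start = p.rng ∧ (subPath p q h1 h2).rng = q.rng ∧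
      p.edges ++ (subPath p q h1 h2).edges = q.edges :=
  (exists_sub h1 h2).choose_spec

/-- The graph inverse semigroup `G(E)` over the graph `Q`: the element `0`
together with the elements `u v⁻¹` where `u, v` are paths with `r(u) = r(v)`. -/
inductive GIS (Q : DGraph) : Type
  | zero : GIS Q
  | elm (u v : GPath Q) (h : u.rng = v.rng) : GIS Q

instance : Zero (GIS Q) := ⟨GIS.zero⟩

-- Multiplication in the graph inverse semigroup:
-- `u₁v₁⁻¹ · u₂v₂⁻¹ = u₁wv₂⁻¹` if `u₂ = v₁w`, `u₁(v₂w)⁻¹` if `v₁ = u₂w`, `0` otherwise.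
open Classical in
noncomputable def GIS.mul : GIS Q → GIS Q → GIS Q
  | .zero, _ => .zero
  | _, .zero => .zero
  | .elm u₁ v₁ h₁, .elm u₂ v₂ h₂ =>
    if hA : u₂.start = v₁.start ∧ v₁.edges <+: u₂.edges then
      GIS.elm (u₁.comp (subPath v₁ u₂ hA.1 hA.2)
          (by rw [(subPath_spec v₁ u₂ hA.1 hA.2).1, h₁]))
        v₂
        (by rw [GPath.comp_rng, (subPath_spec v₁ u₂ hA.1 hA.2).2.1, h₂])
    else if hB : v₁.start = u₂.start ∧ u₂.edges <+: v₁.edges then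
      GIS.elm u₁
        (v₂.comp (subPath u₂ v₁ hB.1 hB.2)
          (by rw [(subPath_spec u₂ v₁ hB.1 hB.2).1, h₂]))
        (by rw [GPath.comp_rng, (subPath_spec u₂ v₁ hB.1 hB.2).2.1, h₁])
    else .zero

noncomputable instance : Mul (GIS Q) := ⟨GIS.mul⟩

/-- The inversion map of the graph inverse semigroup: `(uv⁻¹)⁻¹ = vu⁻¹`, `0⁻¹ = 0`. -/
def GIS.inv : GIS Q → GIS Q
  | .zero => .zero
  | .elm u v h => .elm v u h.symm

/-- The canonical identification of a path `u` with the element `u · r(u)⁻¹` of `G(E)`. -/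
def toGIS (p : GPath Q) : GIS Q := GIS.elm p (GPath.triv Q p.rng) rfl

end DGraph


namespace DGraph
/-- A directed graph is strongly connected if any vertex can be reached from any other. -/
def StrConn (Q : DGraph) : Prop :=
  ∀ a b : Q.V, ∃ p : GPath Q, p.start = a ∧ p.rng = b
end DGraph

open DGraph

theorem stmt13 (Q : DGraph) (hc : StrConn Q) (hfin : Finite Q.V) :
    ∀ A : Set (GPath Q), A.Infinite →
      ∃ B ⊆ A, B.Infinite ∧ ∃ μ : GIS Q, ∀ x ∈ B,
        ∃ y : GPath Q, μ * toGIS x = toGIS y ∧ x.length < y.length := by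
  intro A hA
  -- there is at least one edge
  have hne : Nonempty Q.E := by
    by_contra h
    rw [not_nonempty_iff] at h
    have hinj : Function.Injective (fun p : GPath Q => p.start) := by
      rintro ⟨s, e, ok⟩ ⟨s', e', ok'⟩ hpq
      cases e with
      | nil =>
        cases e' with
        | nil => simpa using hpq
        | cons a l => exact (h.false a).elim
      | cons a l => exact (h.false a).elim
    haveI : Finite (GPath Q) := Finite.of_injective _ hinj
    exact hA A.toFinite
  obtain ⟨e⟩ := hne
  -- pigeonhole: some start vertex occurs infinitely often
  haveI := hA.to_subtype
  obtain ⟨a, hafib⟩ := Finite.exists_infinite_fiber (fun x : A => x.1.start)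
  set B : Set (GPath Q) := {x ∈ A | x.start = a} with hB
  have hBsub : B ⊆ A := fun x hx => hx.1
  have hBinf : B.Infinite := by
    haveI := hafib
    refine Set.infinite_of_injective_forall_mem
      (f := fun z : ((fun x : A => x.1.start) ⁻¹' {a}) => (z.1 : GPath Q)) ?_ ?_
    · intro z w hzw
      exact Subtype.ext (Subtype.ext hzw)
    · intro z
      exact ⟨z.1.2, z.2⟩
  -- build a nontrivial path ending at a
  obtain ⟨q, hqs, hqr⟩ := hc (Q.r e) a
  have pe : GPath Q := ⟨Q.s e, [e], rfl, trivial⟩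
  set p : GPath Q := GPath.comp ⟨Q.s e, [e], rfl, trivial⟩ q (by simpa [GPath.rng, pRng] using hqs.symm) with hp
  have hprng : p.rng = a := by
    rw [hp, GPath.comp_rng]; exact hqr
  refine ⟨B, hBsub, hBinf, GIS.elm p (GPath.triv Q a) hprng, ?_⟩
  intro x hx
  have hxs : x.start = a := hx.2
  have h1 : x.start = (GPath.triv Q a).start := hxs
  have h2 : (GPath.triv Q a).edges <+: x.edges := List.nil_prefix
  set w := subPath (GPath.triv Q a) x h1 h2 with hw
  obtain ⟨hws, hwr, hwe⟩ := subPath_spec (GPath.triv Q a) x h1 h2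
  have hwe' : w.edges = x.edges := hwe
  have hcomp : p.rng = w.start := by rw [hprng, hws]; rfl
  refine ⟨p.comp w hcomp, ?_, ?_⟩
  · show GIS.mul (GIS.elm p (GPath.triv Q a) hprng) (GIS.elm x (GPath.triv Q x.rng) rfl) = _
    simp only [GIS.mul]; rw [dif_pos ⟨h1, h2⟩]
    have hyr : (p.comp w hcomp).rng = x.rng := by rw [GPath.comp_rng]; exact hwr
    show GIS.elm _ (GPath.triv Q x.rng) _ = GIS.elm _ (GPath.triv Q (p.comp w hcomp).rng) _
    congr 1
    rw [hyr]
  · show x.edges.length < (p.edges ++ w.edges).length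
    rw [List.length_append, hwe']
    have : 0 < p.edges.length := by
      rw [hp]
      show 0 < ([e] ++ q.edges).length
      simp
    omega
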